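/- Let m ≥ 2 and n ≥ 2 be integers. If there exist integers d₀,…,d_{m-2}, r₀,…,r_{m-2} satisfying -d_{k-1} + 2d_k - d_{k+1} - 2 = r_k (0 ≤ k ≤ m-2, with d_{-1} = d_{m-1} = 0), r₀ ≥ n, r_k ≥ 0 for k ≥ 1, and d₀ ≤ n - 1, then n ≥ m². -/

import Mathlib

/-- Combining the Plücker-formula inequality with the degree bound d₀ ≤ n - 1
yields n ≥ m². -/
theorem plucker_degree_bound (m n : ℤ) (hm : 2 ≤ m) (hn : 2 ≤ n)
    (h : ∃ d r : ℤ → ℤ,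
      d (-1) = 0 ∧ d (m - 1) = 0 ∧
      (∀ k : ℤ, 0 ≤ k → k ≤ m - 2 → -d (k - 1) + 2 * d k - d (k + 1) - 2 = r k) ∧
      r 0 ≥ n ∧ (∀ k : ℤ, 1 ≤ k → k ≤ m - 2 → r k ≥ 0) ∧
      d 0 ≤ n - 1) :
    n ≥ m ^ 2 := by
  obtain ⟨d, r, hdm1, hdtop, hrec, hr0, hrpos, hd0⟩ := h
  have key : ∀ k : ℤ, 1 ≤ k → k ≤ m - 1 →
      d k - d (k - 1) ≤ d 0 - r 0 - 2 * k ∧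
      d k ≤ (k + 1) * d 0 - k * r 0 - k * (k + 1) := by
    refine fun k hk => Int.le_induction
      (motive := fun k _ => k ≤ m - 1 → d k - d (k - 1) ≤ d 0 - r 0 - 2 * k ∧
        d k ≤ (k + 1) * d 0 - k * r 0 - k * (k + 1)) ?_ ?_ k hk
    · intro _
      have h0 := hrec 0 le_rfl (by omega)
      have e1 : (0:ℤ) - 1 = -1 := by ring
      have e2 : (0:ℤ) + 1 = 1 := by ring
      rw [e1, e2, hdm1] at h0
      have e3 : (1:ℤ) - 1 = 0 := by ring
      rw [e3]
      constructor <;> nlinarith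
    · intro k hk ih hle
      obtain ⟨ih1, ih2⟩ := ih (by omega)
      have hk2 : k ≤ m - 2 := by omega
      have hrk := hrec k (by omega) hk2
      have hrp := hrpos k hk hk2
      have e : k + 1 - 1 = k := by ring
      rw [e]
      constructor <;> nlinarith
  have hfin := key (m - 1) (by omega) le_rfl
  obtain ⟨_, h2⟩ := hfin
  rw [hdtop] at h2
  nlinarith [mul_le_mul_of_nonneg_left hd0 (by linarith : (0:ℤ) ≤ m),
    mul_le_mul_of_nonneg_left hr0.le (by linarith : (0:ℤ) ≤ m - 1)]
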